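/- Let $C_0>0$, $C_1\ge 0$, $p>1$, $q>1$ and $t_0\ge 2$. Suppose $\Phi\colon [t_0,\infty)\to\mathbb{R}$ is differentiable and satisfies $\Phi'(t) \le \frac{-C_0}{t}|\Phi(t)|^p + \frac{C_1}{t^q}$ for all $t\ge t_0$. Then there exists a constant $C_2>0$ (depending on $C_0, C_1, p, q, t_0, \Phi(t_0)$) such that $\Phi(t) \le \frac{C_2}{(\log t)^{p^*-1}}$ for all $t\ge t_0$, where $p^*=p/(p-1)$ is the Hölder conjugate of $p$. -/

import Mathlib

open Real

theorem log_decay_ode_lemma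
    (C0 C1 p q t0 : ℝ) (hC0 : 0 < C0) (hC1 : 0 ≤ C1) (hp : 1 < p) (hq : 1 < q)
    (ht0 : 2 ≤ t0) (Φ Φ' : ℝ → ℝ)
    (hderiv : ∀ t, t0 ≤ t → HasDerivAt Φ (Φ' t) t)
    (hineq : ∀ t, t0 ≤ t → Φ' t ≤ -C0 / t * |Φ t| ^ p + C1 / t ^ q) :
    ∃ C2 : ℝ, 0 < C2 ∧ ∀ t, t0 ≤ t →
      Φ t ≤ C2 / (Real.log t) ^ (p / (p - 1) - 1) := by
  have hp1 : (0:ℝ) < p - 1 := by linarith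
  set a : ℝ := p / (p - 1) - 1 with ha_def
  have ha : a = 1 / (p - 1) := by
    field_simp [ha_def]
    rw [ha_def, sub_mul, div_mul_cancel₀ _ (ne_of_gt hp1)]; ring
  have ha_pos : 0 < a := by
    rw [ha]; positivity
  have hap : a * p = a + 1 := by
    rw [ha]; field_simp
    ring
  set s : ℝ := a + 1 with hs_def
  have hs_pos : 0 < s := by positivity
  have hq1 : (0:ℝ) < q - 1 := by linarith
  set ε : ℝ := (q - 1) / s with hε_def
  have hε : 0 < ε := by positivity
  have hεs : ε * s = q - 1 := by
    rw [hε_def]; field_simp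
  set M : ℝ := (ε⁻¹) ^ s with hM_def
  have hM_pos : 0 < M := by
    apply Real.rpow_pos_of_pos; positivity
  -- key growth bound: (log x)^s ≤ M * x^(q-1) for x ≥ 2
  have hMbound : ∀ x : ℝ, 2 ≤ x → (Real.log x) ^ s ≤ M * x ^ (q - 1) := by
    intro x hx
    have hx0 : (0:ℝ) < x := by linarith
    have hlog : Real.log x ≤ x ^ ε / ε := Real.log_le_rpow_div hx0.le hε
    have h0 : (0:ℝ) ≤ Real.log x := Real.log_nonneg (by linarith)
    calc (Real.log x) ^ s ≤ (x ^ ε / ε) ^ s :=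
          Real.rpow_le_rpow h0 hlog hs_pos.le
      _ = (x ^ ε) ^ s / ε ^ s := Real.div_rpow (Real.rpow_nonneg hx0.le ε) hε.le s
      _ = x ^ (ε * s) / ε ^ s := by rw [← Real.rpow_mul hx0.le]
      _ = M * x ^ (q - 1) := by
          rw [hεs, div_eq_mul_inv, mul_comm, hM_def, Real.inv_rpow hε.le]
  -- positivity facts about points ≥ t0
  have hL : ∀ x : ℝ, t0 ≤ x → 0 < Real.log x := by
    intro x hx
    exact Real.log_pos (by linarith)
  have hxpos : ∀ x : ℝ, t0 ≤ x → 0 < x := fun x hx => by linarith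
  -- choice of the constant K
  set Y : ℝ := (a + C1 * M + 1) / C0 with hY_def
  have hY_nonneg : 0 ≤ Y := by
    apply div_nonneg _ hC0.le
    have : 0 ≤ C1 * M := mul_nonneg hC1 hM_pos.le
    linarith
  set X : ℝ := Y ^ (1 / (p - 1)) with hX_def
  have hX_nonneg : 0 ≤ X := Real.rpow_nonneg hY_nonneg _
  set Z : ℝ := max 0 (Φ t0) * (Real.log t0) ^ a with hZ_def
  have hZ_nonneg : 0 ≤ Z :=
    mul_nonneg (le_max_left _ _) (Real.rpow_nonneg (hL t0 le_rfl).le _)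
  set K : ℝ := 1 + X + Z with hK_def
  have hK1 : 1 ≤ K := by
    have := hX_nonneg; have := hZ_nonneg; rw [hK_def]; linarith
  have hK_pos : 0 < K := lt_of_lt_of_le one_pos hK1
  -- the key inequality for K
  have hKp : C1 * M + 1 ≤ C0 * K ^ p - a * K := by
    have h1 : X ^ (p - 1) = Y := by
      rw [hX_def, ← Real.rpow_mul hY_nonneg, one_div, inv_mul_cancel₀ (ne_of_gt hp1),
        Real.rpow_one]
    have h2 : Y ≤ K ^ (p - 1) := by
      rw [← h1]
      exact Real.rpow_le_rpow hX_nonneg (by rw [hK_def]; linarith [hZ_nonneg]) hp1.le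
    have h3 : K ^ p = K ^ (p - 1) * K := by
      rw [← Real.rpow_add_one (ne_of_gt hK_pos)]; ring_nf
    have h4 : (a + C1 * M + 1) ≤ C0 * K ^ (p - 1) := by
      have := mul_le_mul_of_nonneg_left h2 hC0.le
      rw [hY_def] at this
      rwa [mul_div_cancel₀ _ (ne_of_gt hC0)] at this
    have h5 : (a + C1 * M + 1) * K ≤ C0 * K ^ (p - 1) * K :=
      mul_le_mul_of_nonneg_right h4 hK_pos.le
    have h6 : a * K ≤ a * K := le_rfl
    have h7 : C1 * M + 1 ≤ (C1 * M + 1) * K := by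
      nlinarith [mul_nonneg hC1 hM_pos.le]
    nlinarith
  -- barrier function
  set B : ℝ → ℝ := fun t => K * (Real.log t) ^ (-a) with hB_def
  set B' : ℝ → ℝ := fun t => K * (-a * (Real.log t) ^ (-a - 1) * t⁻¹) with hB'_def
  have hBderiv : ∀ x : ℝ, t0 ≤ x → HasDerivAt B (B' x) x := by
    intro x hx
    have hx0 : (0:ℝ) < x := hxpos x hx
    have hlog : HasDerivAt Real.log x⁻¹ x := Real.hasDerivAt_log (ne_of_gt hx0)
    have houter : HasDerivAt (fun y : ℝ => y ^ (-a)) (-a * (Real.log x) ^ (-a - 1)) (Real.log x) :=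
      Real.hasDerivAt_rpow_const (Or.inl (ne_of_gt (hL x hx)))
    have hcomp : HasDerivAt (fun t : ℝ => (Real.log t) ^ (-a))
        (-a * (Real.log x) ^ (-a - 1) * x⁻¹) x := houter.comp x hlog
    exact hcomp.const_mul K
  -- initial condition: Φ t0 ≤ B t0
  have hinit : Φ t0 ≤ B t0 := by
    have hL0 := hL t0 le_rfl
    have h1 : (Real.log t0) ^ a * (Real.log t0) ^ (-a) = 1 := by
      rw [← Real.rpow_add hL0]; simp
    have h2 : Φ t0 ≤ Z * (Real.log t0) ^ (-a) := by
      rw [hZ_def, mul_assoc, h1, mul_one]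
      exact le_max_right _ _
    have h3 : Z * (Real.log t0) ^ (-a) ≤ K * (Real.log t0) ^ (-a) := by
      apply mul_le_mul_of_nonneg_right _ (Real.rpow_nonneg hL0.le _)
      rw [hK_def]; linarith [hX_nonneg]
    exact h2.trans h3
  refine ⟨K, hK_pos, fun t ht => ?_⟩
  -- comparison on [t0, t]
  have hcomp : Φ t ≤ B t := by
    have := image_le_of_deriv_right_lt_deriv_boundary' (f := Φ) (f' := Φ') (a := t0) (b := t)
      (B := B) (B' := B')
      (fun x hx => ((hderiv x hx.1).continuousAt).continuousWithinAt)
      (fun x hx => (hderiv x hx.1).hasDerivWithinAt)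
      hinit
      (fun x hx => ((hBderiv x hx.1).continuousAt).continuousWithinAt)
      (fun x hx => (hBderiv x hx.1).hasDerivWithinAt)
      ?_ (Set.right_mem_Icc.2 ht)
    · exact this
    · intro x hx heq
      have hxt0 : t0 ≤ x := hx.1
      have hx0 : (0:ℝ) < x := hxpos x hxt0
      have hLx : (0:ℝ) < Real.log x := hL x hxt0
      set L : ℝ := Real.log x with hL_def
      have hBx_pos : 0 < B x := by
        rw [hB_def]
        exact mul_pos hK_pos (Real.rpow_pos_of_pos hLx _)
      have habs : |Φ x| = B x := by
        rw [heq, abs_of_pos hBx_pos]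
      have hstep : Φ' x ≤ -C0 / x * (B x) ^ p + C1 / x ^ q := by
        have := hineq x hxt0
        rwa [habs] at this
      refine lt_of_le_of_lt hstep ?_
      -- now the pure inequality for the barrier
      set P : ℝ := L ^ s with hP_def
      have hP_pos : 0 < P := Real.rpow_pos_of_pos hLx _
      set X1 : ℝ := x ^ (q - 1) with hX1_def
      have hX1_pos : 0 < X1 := Real.rpow_pos_of_pos hx0 _
      have hBxp : (B x) ^ p = K ^ p * P⁻¹ := by
        rw [hB_def]
        rw [Real.mul_rpow hK_pos.le (Real.rpow_nonneg hLx.le _)]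
        congr 1
        rw [← Real.rpow_mul hLx.le, show -a * p = -(s) by rw [← hap]; ring]
        rw [Real.rpow_neg hLx.le]
      have hB'x : B' x = K * (-a * P⁻¹ * x⁻¹) := by
        simp only [hB'_def]
        have : L ^ (-a - 1) = P⁻¹ := by
          rw [show -a - 1 = -s by rw [hs_def]; ring, Real.rpow_neg hLx.le]
        rw [this]
      have hxq : x ^ q = X1 * x := by
        rw [hX1_def, ← Real.rpow_add_one (ne_of_gt hx0)]
        ring_nf
      have hkey : C1 * P < (C0 * K ^ p - a * K) * X1 := by
        have h1 : C1 * P ≤ C1 * (M * X1) :=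
          mul_le_mul_of_nonneg_left (hMbound x (le_trans ht0 hxt0)) hC1
        have h2 : C1 * M * X1 < (C0 * K ^ p - a * K) * X1 := by
          apply mul_lt_mul_of_pos_right _ hX1_pos
          linarith
        calc C1 * P ≤ C1 * M * X1 := by rw [mul_assoc]; exact h1
          _ < _ := h2
      rw [hBxp, hB'x, hxq]
      have hexpand : K * (-a * P⁻¹ * x⁻¹) - (-C0 / x * (K ^ p * P⁻¹) + C1 / (X1 * x)) =
          ((C0 * K ^ p - a * K) * X1 - C1 * P) / (P * X1 * x) := by
        field_simp
        ring
      have hpos : 0 < ((C0 * K ^ p - a * K) * X1 - C1 * P) / (P * X1 * x) := by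
        apply div_pos (by linarith) (by positivity)
      linarith [hexpand, hpos]
  -- convert B t to the stated form
  have hLt : 0 < Real.log t := hL t ht
  have : B t = K / (Real.log t) ^ a := by
    simp only [hB_def]
    rw [Real.rpow_neg hLt.le, div_eq_mul_inv]
  rw [ha_def] at this
  linarith [hcomp, this.ge, this.le]
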